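/- Let n ≥ 1 and let M be an invertible n×n complex matrix with ‖M‖ > 0, where ‖·‖ is the ℓ² operator norm. Suppose there exists a unit vector v ∈ EuclideanSpace ℂ (Fin n) with ‖M v‖ = ‖M‖ and ⟪M v, v⟫ = 0. Let c₀, c₁ ∈ ℂ with Re(c₁) ≥ |c₁|²/(2‖M‖²). Then ‖M‖ ≤ ‖M + c₀•1 + c₁•(Mᴴ)⁻¹‖. -/

import Mathlib

open Matrix Complex

noncomputable def l2opNorm {n : ℕ} (M : Matrix (Fin n) (Fin n) ℂ) : ℝ :=
  ‖(Matrix.toEuclideanCLM (𝕜 := ℂ) M : EuclideanSpace ℂ (Fin n) →L[ℂ] EuclideanSpace ℂ (Fin n))‖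

theorem norm_le_norm_add_scalar_add_inv_adjoint
    {n : ℕ} (hn : 1 ≤ n) (M : Matrix (Fin n) (Fin n) ℂ)
    (hMunit : IsUnit M) (hMpos : 0 < l2opNorm M)
    (v : EuclideanSpace ℂ (Fin n)) (hv : ‖v‖ = 1)
    (hMv : ‖(Matrix.toEuclideanCLM (𝕜 := ℂ) M) v‖ = l2opNorm M)
    (horth : (inner ℂ ((Matrix.toEuclideanCLM (𝕜 := ℂ) M) v) v : ℂ) = 0)
    (c₀ c₁ : ℂ)
    (hc₁ : ‖c₁‖ ^ 2 / (2 * l2opNorm M ^ 2) ≤ c₁.re) :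
    l2opNorm M ≤ l2opNorm (M + c₀ • (1 : Matrix (Fin n) (Fin n) ℂ) + c₁ • (Mᴴ)⁻¹) := by
  classical
  set m := l2opNorm M with hm
  set T : EuclideanSpace ℂ (Fin n) →L[ℂ] EuclideanSpace ℂ (Fin n) :=
    Matrix.toEuclideanCLM (𝕜 := ℂ) M with hTdef
  set W : EuclideanSpace ℂ (Fin n) →L[ℂ] EuclideanSpace ℂ (Fin n) :=
    Matrix.toEuclideanCLM (𝕜 := ℂ) ((Mᴴ)⁻¹) with hWdef
  set u : EuclideanSpace ℂ (Fin n) := ((m : ℂ))⁻¹ • T v with hu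
  have hmne : (m : ℝ) ≠ 0 := ne_of_gt hMpos
  have hdet : IsUnit (Mᴴ).det := by
    rw [Matrix.det_conjTranspose]
    exact ((Matrix.isUnit_iff_isUnit_det M).mp hMunit).star
  have hMH : Mᴴ * (Mᴴ)⁻¹ = 1 := Matrix.mul_nonsing_inv _ hdet
  have hadj : ContinuousLinearMap.adjoint T = Matrix.toEuclideanCLM (𝕜 := ℂ) Mᴴ := by
    rw [← Matrix.star_eq_conjTranspose, map_star, ← ContinuousLinearMap.star_eq_adjoint, hTdef]
  have hTW : ∀ x : EuclideanSpace ℂ (Fin n), ContinuousLinearMap.adjoint T (W x) = x := by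
    intro x
    have : (Matrix.toEuclideanCLM (𝕜 := ℂ) Mᴴ) ∘L W
        = Matrix.toEuclideanCLM (𝕜 := ℂ) (Mᴴ * (Mᴴ)⁻¹) := by
      rw [_root_.map_mul, hWdef]; rfl
    have h2 := congrFun (congrArg (fun (f : _ →L[ℂ] _) => (f : _ → _)) this) x
    simpa [hadj, hMH] using h2
  have hnu : ‖u‖ = 1 := by
    rw [hu, norm_smul, hMv, norm_inv, Complex.norm_real, Real.norm_eq_abs, abs_of_pos hMpos]
    field_simp
  have h1 : (inner ℂ (T v) u : ℂ) = (m : ℂ) := by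
    have hmC : (m : ℂ) ≠ 0 := by exact_mod_cast hmne
    rw [hu, inner_smul_right, inner_self_eq_norm_sq_to_K, hMv]
    field_simp
    rfl
  have h2 : (inner ℂ v u : ℂ) = 0 := by
    rw [hu, inner_smul_right, ← inner_conj_symm, horth]
    simp
  have h3 : (inner ℂ (W v) u : ℂ) = ((m : ℂ))⁻¹ := by
    rw [hu, inner_smul_right, ← ContinuousLinearMap.adjoint_inner_left T v (W v), hTW v,
      inner_self_eq_norm_sq_to_K, hv]
    simp
  have hLv : (Matrix.toEuclideanCLM (𝕜 := ℂ) (M + c₀ • (1 : Matrix (Fin n) (Fin n) ℂ)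
      + c₁ • (Mᴴ)⁻¹)) v = T v + c₀ • v + c₁ • W v := by
    simp [_root_.map_add, _root_.map_smul, _root_.map_one, hTdef, hWdef,
      ContinuousLinearMap.add_apply, ContinuousLinearMap.smul_apply, ContinuousLinearMap.one_apply]
  have key : (inner ℂ ((Matrix.toEuclideanCLM (𝕜 := ℂ) (M + c₀ • (1 : Matrix (Fin n) (Fin n) ℂ)
      + c₁ • (Mᴴ)⁻¹)) v) u : ℂ)
      = (m : ℂ) + (starRingEnd ℂ) c₁ * ((m : ℂ))⁻¹ := by
    rw [hLv, inner_add_left, inner_add_left, inner_smul_left, inner_smul_left, h1, h2, h3]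
    ring
  have hre : 0 ≤ c₁.re := by
    refine le_trans ?_ hc₁
    positivity
  have hrez : m ≤ ((m : ℂ) + (starRingEnd ℂ) c₁ * ((m : ℂ))⁻¹).re := by
    have : ((m : ℂ) + (starRingEnd ℂ) c₁ * ((m : ℂ))⁻¹).re = m + c₁.re * m⁻¹ := by
      rw [← Complex.ofReal_inv]
      simp [Complex.add_re, Complex.mul_re]
    rw [this]
    have : 0 ≤ c₁.re * m⁻¹ := mul_nonneg hre (by positivity)
    linarith
  calc m ≤ ((m : ℂ) + (starRingEnd ℂ) c₁ * ((m : ℂ))⁻¹).re := hrez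
    _ ≤ ‖(m : ℂ) + (starRingEnd ℂ) c₁ * ((m : ℂ))⁻¹‖ := Complex.re_le_norm _
    _ = ‖(inner ℂ ((Matrix.toEuclideanCLM (𝕜 := ℂ) (M + c₀ • (1 : Matrix (Fin n) (Fin n) ℂ)
        + c₁ • (Mᴴ)⁻¹)) v) u : ℂ)‖ := by rw [key]
    _ ≤ ‖(Matrix.toEuclideanCLM (𝕜 := ℂ) (M + c₀ • (1 : Matrix (Fin n) (Fin n) ℂ)
        + c₁ • (Mᴴ)⁻¹)) v‖ * ‖u‖ := norm_inner_le_norm _ _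
    _ ≤ l2opNorm (M + c₀ • (1 : Matrix (Fin n) (Fin n) ℂ) + c₁ • (Mᴴ)⁻¹) * ‖v‖ * ‖u‖ := by
        gcongr
        exact ContinuousLinearMap.le_opNorm _ _
    _ = l2opNorm (M + c₀ • (1 : Matrix (Fin n) (Fin n) ℂ) + c₁ • (Mᴴ)⁻¹) := by
        rw [hv, hnu]; ring
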